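/- Let r ∈ R be any root of X³ + 7X - 12 that does not lie in the image of ℤ₅ in R. Then 14r - 19 is a unit of R and is not a fifth power in R: there is no y ∈ R with y⁵ = 14r - 19. -/

import Mathlib

open Polynomial

instance : Fact (Nat.Prime 5) := ⟨by norm_num⟩

/-- `R = ℤ₅[X]/(X² - 10)`, i.e. `ℤ₅` with a square root of `10` adjoined. -/
noncomputable abbrev R : Type := AdjoinRoot ((X : Polynomial ℤ_[5]) ^ 2 - 10)

noncomputable def tR : R := AdjoinRoot.root ((X : Polynomial ℤ_[5]) ^ 2 - 10)

noncomputable def aR : ℤ_[5] →+* R := algebraMap ℤ_[5] R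

lemma ten_C : ((10 : Polynomial ℤ_[5])) = C 10 := (map_ofNat C 10).symm

lemma monic_f : ((X : Polynomial ℤ_[5]) ^ 2 - 10).Monic := by
  rw [ten_C]; exact monic_X_pow_sub_C _ (by norm_num)

lemma degree_f : ((X : Polynomial ℤ_[5]) ^ 2 - 10).degree = 2 := by
  rw [ten_C]; exact degree_X_pow_sub_C (by norm_num) _

lemma wb_le_one {d : WithBot ℕ} (h : d < 2) : d ≤ 1 := by
  cases d with
  | bot => exact bot_le
  | coe n =>
    have h2 : n < 2 := WithBot.coe_lt_coe.mp h
    exact le_trans (WithBot.coe_le_coe.mpr (Nat.lt_succ_iff.mp h2)) (by norm_num)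

lemma deg_lin_lt (c d : ℤ_[5]) : (C c + C d * X).degree < 2 :=
  lt_of_le_of_lt (le_trans (degree_add_le _ _)
    (max_le (le_trans degree_C_le (by norm_num)) (degree_C_mul_X_le d))) (by norm_num)

lemma ht2 : tR ^ 2 = 10 := by
  have h : AdjoinRoot.mk ((X : Polynomial ℤ_[5]) ^ 2 - 10) ((X : Polynomial ℤ_[5]) ^ 2 - 10) = 0 :=
    AdjoinRoot.mk_self
  rw [map_sub, map_pow, AdjoinRoot.mk_X, map_ofNat, sub_eq_zero] at h
  exact h

lemma mk_lin (c d : ℤ_[5]) :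
    AdjoinRoot.mk ((X : Polynomial ℤ_[5]) ^ 2 - 10) (C c + C d * X) = aR c + aR d * tR := by
  simp [tR, aR, AdjoinRoot.algebraMap_eq]

lemma decomp (z : R) : ∃ c d : ℤ_[5], z = aR c + aR d * tR := by
  obtain ⟨p, rfl⟩ := AdjoinRoot.mk_surjective (g := (X : Polynomial ℤ_[5]) ^ 2 - 10) z
  have hdeg : (p %ₘ ((X : Polynomial ℤ_[5]) ^ 2 - 10)).degree < 2 := by
    rw [← degree_f]; exact degree_modByMonic_lt _ monic_f
  set q := p %ₘ ((X : Polynomial ℤ_[5]) ^ 2 - 10) with hq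
  set c := q.coeff 0 with hc
  set d := q.coeff 1 with hd
  have hq1 : q = C d * X + C c :=
    eq_X_add_C_of_degree_le_one (wb_le_one hdeg)
  refine ⟨c, d, ?_⟩
  have hmk : AdjoinRoot.mk _ p = AdjoinRoot.mk ((X : Polynomial ℤ_[5]) ^ 2 - 10) q := by
    rw [AdjoinRoot.mk_eq_mk]
    exact ⟨p /ₘ ((X : Polynomial ℤ_[5]) ^ 2 - 10), by rw [hq, modByMonic_eq_sub_mul_div p ((X : Polynomial ℤ_[5]) ^ 2 - 10)]; ring⟩
  rw [hmk, hq1, ← mk_lin]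
  congr 1
  ring

lemma indep {c d : ℤ_[5]} (h : aR c + aR d * tR = 0) : c = 0 ∧ d = 0 := by
  have h0 : AdjoinRoot.mk ((X : Polynomial ℤ_[5]) ^ 2 - 10) (C c + C d * X) = AdjoinRoot.mk _ 0 := by
    rw [mk_lin, h, map_zero]
  have h1 := congrArg (AdjoinRoot.modByMonicHom monic_f) h0
  rw [AdjoinRoot.modByMonicHom_mk, AdjoinRoot.modByMonicHom_mk,
    (modByMonic_eq_self_iff monic_f).mpr (by rw [degree_f]; exact deg_lin_lt c d),
    zero_modByMonic] at h1
  constructor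
  · have := congrArg (fun p => Polynomial.coeff p 0) h1
    simpa using this
  · have := congrArg (fun p => Polynomial.coeff p 1) h1
    simpa using this

lemma indep' {c d c' d' : ℤ_[5]} (h : aR c + aR d * tR = aR c' + aR d' * tR) :
    c = c' ∧ d = d' := by
  have : aR (c - c') + aR (d - d') * tR = 0 := by
    rw [map_sub, map_sub]; rw [← sub_eq_zero] at h; linear_combination h
  obtain ⟨h1, h2⟩ := indep this
  exact ⟨sub_eq_zero.mp h1, sub_eq_zero.mp h2⟩

lemma pad_unit {x : ℤ_[5]} (h : ∃ y, (PadicInt.toZModPow 2 x) * y = 1) : IsUnit x := by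
  by_contra hnu
  have hx : x ∈ IsLocalRing.maximalIdeal ℤ_[5] := hnu
  rw [PadicInt.maximalIdeal_eq_span_p, Ideal.mem_span_singleton] at hx
  obtain ⟨k, hk⟩ := hx
  obtain ⟨y, hy⟩ := h
  rw [hk] at hy
  have h5 : ((5:ℕ) : ZMod (5^2)) * (PadicInt.toZModPow 2 k * y) = 1 := by
    rw [← hy, map_mul, map_natCast]; ring
  have h25 : ((5:ℕ) : ZMod (5^2)) * (((5:ℕ) : ZMod (5^2)) * (PadicInt.toZModPow 2 k * y))
      = (5:ℕ) := by rw [h5, mul_one]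
  have : ((5:ℕ) : ZMod (5^2)) * ((5:ℕ) : ZMod (5^2)) = 0 := by decide
  rw [← mul_assoc, this, zero_mul] at h25
  exact absurd h25.symm (by decide)

lemma key25 : ∀ c d : ZMod (5^2), c^3 + 30*c*d^2 + 7*c - 12 = 0 →
    3*c^2 + 10*d^2 + 7 = 0 → d^2 ≠ 0 := by decide

lemma unit25 : ∀ c d : ZMod (5^2), c^3 + 30*c*d^2 + 7*c - 12 = 0 →
    3*c^2 + 10*d^2 + 7 = 0 →
    ∃ y, ((14*c-19)^2 - 10*(14*d)^2) * y = 1 := by decide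

lemma fifth25 : ∀ a b d : ZMod (5^2), 5*a^4*b + 100*a^2*b^3 + 100*b^5 = 14*d →
    d^2 = 0 := by decide

set_option maxHeartbeats 2000000 in
theorem stmt_12 (r : R) (hroot : r ^ 3 + 7 * r - 12 = 0)
    (hr : r ∉ Set.range (algebraMap ℤ_[5] R)) :
    IsUnit (14 * r - 19) ∧ ¬ ∃ y : R, y ^ 5 = 14 * r - 19 := by
  obtain ⟨c, d, hre⟩ := decomp r
  rw [hre] at hroot
  have hE : aR (c^3 + 30*c*d^2 + 7*c - 12) + aR (3*c^2*d + 10*d^3 + 7*d) * tR = 0 := by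
    simp only [map_add, map_sub, map_mul, map_pow, map_ofNat]
    linear_combination hroot - (3*(aR c)*(aR d)^2 + (aR d)^3*tR) * ht2
  obtain ⟨hE1, hE2⟩ := indep hE
  have hd0 : d ≠ 0 := by
    rintro rfl
    exact hr ⟨c, by rw [hre, map_zero, zero_mul, add_zero]; rfl⟩
  have hE2' : 3*c^2 + 10*d^2 + 7 = 0 := by
    have h := mul_eq_zero.mp (show d * (3*c^2 + 10*d^2 + 7) = 0 by linear_combination hE2)
    tauto
  set φ := PadicInt.toZModPow (p := 5) 2 with hφ
  have m1 : (φ c)^3 + 30*(φ c)*(φ d)^2 + 7*(φ c) - 12 = 0 := by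
    have := congrArg φ hE1
    simpa only [map_add, map_sub, map_mul, map_pow, map_ofNat, map_zero] using this
  have m2 : 3*(φ c)^2 + 10*(φ d)^2 + 7 = 0 := by
    have := congrArg φ hE2'
    simpa only [map_add, map_mul, map_pow, map_ofNat, map_zero] using this
  constructor
  · have hu : IsUnit ((14*c-19)^2 - 10*(14*d)^2 : ℤ_[5]) := by
      apply pad_unit
      have : φ ((14*c-19)^2 - 10*(14*d)^2) = (14*(φ c)-19)^2 - 10*(14*(φ d))^2 := by
        simp only [map_add, map_sub, map_mul, map_pow, map_ofNat]
      rw [this]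
      exact unit25 _ _ m1 m2
    have hmul : (14 * r - 19) * (aR (14*c-19) - aR (14*d) * tR)
        = aR ((14*c-19)^2 - 10*(14*d)^2) := by
      rw [hre]
      simp only [map_add, map_sub, map_mul, map_pow, map_ofNat]
      linear_combination (-(14 * aR d)^2) * ht2
    have := (hu.map aR)
    rw [← hmul] at this
    exact isUnit_of_mul_isUnit_left this
  · rintro ⟨y, hy⟩
    obtain ⟨a, b, hyab⟩ := decomp y
    rw [hyab, hre] at hy
    have hY : aR (a^5 + 100*a^3*b^2 + 500*a*b^4) + aR (5*a^4*b + 100*a^2*b^3 + 100*b^5) * tR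
        = aR (14*c - 19) + aR (14*d) * tR := by
      simp only [map_add, map_sub, map_mul, map_pow, map_ofNat]
      linear_combination hy - (10*(aR a)^3*(aR b)^2 + 5*(aR a)*(aR b)^4*(10+tR^2)
        + 10*(aR a)^2*(aR b)^3*tR + (aR b)^5*tR*(10+tR^2)) * ht2
    obtain ⟨-, hb⟩ := indep' hY
    have := congrArg φ hb
    simp only [map_add, map_mul, map_pow, map_ofNat] at this
    exact key25 _ _ m1 m2 (fifth25 _ _ _ this)
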